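/- Main theorem, (e) ⇒ (a): Let C be a monoidal category such that the tensor product functor ⊗ : C × C ⥤ C admits a right adjoint. Then C is cocartesian: 𝟙_C is an initial object, and for all objects A, B the cospan A —ι₁→ A ⊗ B ←ι₂— B, with ι₁ := (ρ_A).inv ≫ (A ◁ ![B]) and ι₂ := (λ_B).inv ≫ (![A] ▷ B), where ![X] : 𝟙_C ⟶ X is the unique morphism from the initial unit, is a binary coproduct of A and B; in particular C has all finite coproducts. -/

import Mathlib

open CategoryTheory CategoryTheory.Limits CategoryTheory.MonoidalCategory

section CocartAux

variable {C : Type*} [Category C] [MonoidalCategory C]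

variable {G : C ⥤ C × C}

private theorem e_whiskerLeft (adj : MonoidalCategory.tensor C ⊣ G)
    {A B B' X : C} (k : B' ⟶ B) (g : A ⊗ B ⟶ X) :
    adj.homEquiv (A, B') X ((A ◁ k) ≫ g) =
      ((adj.homEquiv (A, B) X g).1, k ≫ (adj.homEquiv (A, B) X g).2) := by
  have h := adj.homEquiv_naturality_left
    ((𝟙 A, k) : ((A, B') : C × C) ⟶ ((A, B) : C × C)) g
  have h2 : (MonoidalCategory.tensor C).map
      ((𝟙 A, k) : ((A, B') : C × C) ⟶ ((A, B) : C × C)) = A ◁ k := by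
    simp [MonoidalCategory.tensor]
  rw [h2] at h
  rw [h]
  ext <;> simp [CategoryTheory.prod_comp]

private theorem e_whiskerRight (adj : MonoidalCategory.tensor C ⊣ G)
    {A A' B X : C} (h : A' ⟶ A) (g : A ⊗ B ⟶ X) :
    adj.homEquiv (A', B) X ((h ▷ B) ≫ g) =
      (h ≫ (adj.homEquiv (A, B) X g).1, (adj.homEquiv (A, B) X g).2) := by
  have hn := adj.homEquiv_naturality_left
    ((h, 𝟙 B) : ((A', B) : C × C) ⟶ ((A, B) : C × C)) g
  have h2 : (MonoidalCategory.tensor C).map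
      ((h, 𝟙 B) : ((A', B) : C × C) ⟶ ((A, B) : C × C)) = h ▷ B := by
    simp [MonoidalCategory.tensor]
  rw [h2] at hn
  rw [hn]
  ext <;> simp [CategoryTheory.prod_comp]

private theorem hom_unit_subsingleton (adj : MonoidalCategory.tensor C ⊣ G)
    (X : C) (u v : 𝟙_ C ⟶ X) : u = v := by
  have key : ∀ w : 𝟙_ C ⟶ X,
      adj.homEquiv (𝟙_ C, 𝟙_ C) X ((λ_ (𝟙_ C)).hom ≫ w) =
        ((adj.homEquiv (𝟙_ C, X) X (λ_ X).hom).1,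
         (adj.homEquiv (X, 𝟙_ C) X (ρ_ X).hom).2) := by
    intro w
    have h1 : (λ_ (𝟙_ C)).hom ≫ w = (𝟙_ C ◁ w) ≫ (λ_ X).hom :=
      (MonoidalCategory.leftUnitor_naturality w).symm
    have h2 : (λ_ (𝟙_ C)).hom ≫ w = (w ▷ 𝟙_ C) ≫ (ρ_ X).hom := by
      rw [unitors_equal]
      exact (MonoidalCategory.rightUnitor_naturality w).symm
    have eL := e_whiskerLeft adj w (λ_ X).hom
    have eR := e_whiskerRight adj w (ρ_ X).hom
    rw [← h1] at eL
    rw [← h2] at eR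
    ext
    · simpa using congrArg Prod.fst eL
    · simpa using congrArg Prod.snd eR
  have h3 := (adj.homEquiv (𝟙_ C, 𝟙_ C) X).injective ((key u).trans (key v).symm)
  exact (cancel_epi (λ_ (𝟙_ C)).hom).mp h3

private theorem hom_unit_nonempty (adj : MonoidalCategory.tensor C ⊣ G) (X : C) :
    Nonempty (𝟙_ C ⟶ X) :=
  ⟨(λ_ (𝟙_ C)).inv ≫ (adj.homEquiv (𝟙_ C, 𝟙_ C) X).symm
    ((adj.homEquiv (𝟙_ C, X) X (λ_ X).hom).1, (adj.homEquiv (X, 𝟙_ C) X (ρ_ X).hom).2)⟩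

private theorem isColimit_cofan (adj : MonoidalCategory.tensor C ⊣ G)
    (hsub : ∀ (X : C) (u v : 𝟙_ C ⟶ X), u = v)
    (A B : C) (tB : 𝟙_ C ⟶ B) (tA : 𝟙_ C ⟶ A) :
    Nonempty (IsColimit (BinaryCofan.mk ((ρ_ A).inv ≫ (A ◁ tB)) ((λ_ B).inv ≫ (tA ▷ B)))) := by
  refine ⟨BinaryCofan.isColimitMk
    (fun s => (adj.homEquiv (A, B) s.pt).symm
      ((adj.homEquiv (A, 𝟙_ C) s.pt ((ρ_ A).hom ≫ s.inl)).1,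
       (adj.homEquiv (𝟙_ C, B) s.pt ((λ_ B).hom ≫ s.inr)).2))
    (fun s => ?_) (fun s => ?_) (fun s m h1 h2 => ?_)⟩
  · have key : (A ◁ tB) ≫ (adj.homEquiv (A, B) s.pt).symm
        ((adj.homEquiv (A, 𝟙_ C) s.pt ((ρ_ A).hom ≫ s.inl)).1,
         (adj.homEquiv (𝟙_ C, B) s.pt ((λ_ B).hom ≫ s.inr)).2) = (ρ_ A).hom ≫ s.inl := by
      apply (adj.homEquiv (A, 𝟙_ C) s.pt).injective
      have hw := e_whiskerLeft adj tB ((adj.homEquiv (A, B) s.pt).symm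
        ((adj.homEquiv (A, 𝟙_ C) s.pt ((ρ_ A).hom ≫ s.inl)).1,
         (adj.homEquiv (𝟙_ C, B) s.pt ((λ_ B).hom ≫ s.inr)).2))
      rw [Equiv.apply_symm_apply] at hw
      rw [hw]
      refine Prod.ext rfl (hsub _ _ _)
    rw [Category.assoc, key]
    exact Iso.inv_hom_id_assoc _ _
  · have key : (tA ▷ B) ≫ (adj.homEquiv (A, B) s.pt).symm
        ((adj.homEquiv (A, 𝟙_ C) s.pt ((ρ_ A).hom ≫ s.inl)).1,
         (adj.homEquiv (𝟙_ C, B) s.pt ((λ_ B).hom ≫ s.inr)).2) = (λ_ B).hom ≫ s.inr := by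
      apply (adj.homEquiv (𝟙_ C, B) s.pt).injective
      have hw := e_whiskerRight adj tA ((adj.homEquiv (A, B) s.pt).symm
        ((adj.homEquiv (A, 𝟙_ C) s.pt ((ρ_ A).hom ≫ s.inl)).1,
         (adj.homEquiv (𝟙_ C, B) s.pt ((λ_ B).hom ≫ s.inr)).2))
      rw [Equiv.apply_symm_apply] at hw
      rw [hw]
      refine Prod.ext (hsub _ _ _) rfl
    rw [Category.assoc, key]
    exact Iso.inv_hom_id_assoc _ _
  · dsimp only
    apply (adj.homEquiv (A, B) s.pt).injective
    rw [Equiv.apply_symm_apply]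
    have hh1 : (ρ_ A).hom ≫ s.inl = (A ◁ tB) ≫ m := by rw [← h1]; simp
    have hh2 : (λ_ B).hom ≫ s.inr = (tA ▷ B) ≫ m := by rw [← h2]; simp
    rw [hh1, hh2, e_whiskerLeft adj tB m, e_whiskerRight adj tA m]
    ext <;> rfl


end CocartAux

/-- Main theorem, (e) ⇒ (a): if the tensor product functor `C × C ⥤ C` of a monoidal
category admits a right adjoint, then `C` is cocartesian: the unit is initial, the
canonical cospans are binary coproducts, and `C` has all finite coproducts. -/
theorem cocartesian_of_tensor_isLeftAdjoint {C : Type*} [Category C] [MonoidalCategory C]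
    [(MonoidalCategory.tensor C).IsLeftAdjoint] :
    ∃ hI : IsInitial (𝟙_ C),
      (∀ A B : C, Nonempty (IsColimit (BinaryCofan.mk
        ((ρ_ A).inv ≫ (A ◁ hI.to B)) ((λ_ B).inv ≫ (hI.to A ▷ B))))) ∧
      HasFiniteCoproducts C := by
  let adj := Adjunction.ofIsLeftAdjoint (MonoidalCategory.tensor C)
  have hsub := hom_unit_subsingleton adj
  have hne := hom_unit_nonempty adj
  have hI : IsInitial (𝟙_ C) :=
    IsInitial.ofUniqueHom (fun Y => (hne Y).some) (fun Y m => hsub Y m _)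
  refine ⟨hI, fun A B => isColimit_cofan adj hsub A B _ _, ?_⟩
  haveI : HasInitial C := hI.hasInitial
  haveI : HasBinaryCoproducts C := by
    constructor
    intro F
    haveI : HasColimit (pair (F.obj ⟨WalkingPair.left⟩) (F.obj ⟨WalkingPair.right⟩)) :=
      HasColimit.mk ⟨_, (isColimit_cofan adj hsub _ _ (hI.to _) (hI.to _)).some⟩
    exact hasColimit_of_iso (diagramIsoPair F)
  exact hasFiniteCoproducts_of_has_binary_and_initial
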